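/- Let (Γ₁,...,Γ_d) be a cycle-free d-partition of K_{2d} with Γ_d = Ω_d^{(d)}, and let a ≠ b be vertices in {1,...,2d−2} with (a,b) ∈ E(Γ_i), (a,2d) ∈ E(Γ_i), and (b,2d) ∈ E(Γ_j) for some i ≠ j, i,j ≤ d−1. Then the involution (a,b,2d) applied to (Γ₁,...,Γ_d) swaps the edges (a,2d) and (b,2d) between Γ_i and Γ_j, keeps (a,b) in Γ_i, and leaves all other edges incident to vertices 2d−1 or 2d unchanged. -/

import Mathlib

open SimpleGraph

/-- A cycle-free `d`-partition of the complete graph on `Fin n`: each unordered pair of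
distinct vertices is an edge of exactly one component, and every component is acyclic. -/
def IsCFP {n d : ℕ} (Γ : Fin d → SimpleGraph (Fin n)) : Prop :=
  (∀ u v : Fin n, u ≠ v → ∃! i, (Γ i).Adj u v) ∧ ∀ i, (Γ i).IsAcyclic

/-- `(u,v)` is the same unordered pair as `(a,b)`. -/
def SamePair {n : ℕ} (u v a b : Fin n) : Prop := (u = a ∧ v = b) ∨ (u = b ∧ v = a)

/-- The partitions `P` and `Q` differ on the edge `(u,v)`. -/
def Differs {n d : ℕ} (P Q : Fin d → SimpleGraph (Fin n)) (u v : Fin n) : Prop :=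
  ∃ i, ¬ ((Q i).Adj u v ↔ (P i).Adj u v)

/-- `Q` agrees with `P` on every edge except the edges `(x,y)`, `(x,z)`, `(y,z)`,
and differs from `P` on at least two of those three edges. -/
def FlipCond {n d : ℕ} (x y z : Fin n) (P Q : Fin d → SimpleGraph (Fin n)) : Prop :=
  (∀ u v : Fin n, ¬ SamePair u v x y → ¬ SamePair u v x z → ¬ SamePair u v y z →
      ∀ i, ((Q i).Adj u v ↔ (P i).Adj u v)) ∧
  ((Differs P Q x y ∧ Differs P Q x z) ∨ (Differs P Q x y ∧ Differs P Q y z) ∨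
    (Differs P Q x z ∧ Differs P Q y z))

/-- One involution move between cycle-free partitions. -/
def Step {n d : ℕ} (P Q : Fin d → SimpleGraph (Fin n)) : Prop :=
  IsCFP P ∧ IsCFP Q ∧ ∃ x y z : Fin n, x ≠ y ∧ x ≠ z ∧ y ≠ z ∧ FlipCond x y z P Q

/-- Involution equivalence: a finite sequence of involution moves. -/
def InvEquiv {n d : ℕ} : (Fin d → SimpleGraph (Fin n)) → (Fin d → SimpleGraph (Fin n)) → Prop :=
  Relation.ReflTransGen Step

/-- The graph `Ω_t^{(d)}` on vertices `{1,…,2d}` (vertex `v : Fin (2d)` has label `v+1`):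
the edge `(i,j)`, `i<j`, belongs to `Ω_t` iff `i+j` is even and `i ∈ {2t-1,2t}`,
or `i+j` is odd and `j ∈ {2t-1,2t}`. -/
def Omega (d t : ℕ) : SimpleGraph (Fin (2*d)) :=
  SimpleGraph.fromRel (fun u v =>
    u.1 < v.1 ∧
    (((u.1 + v.1) % 2 = 0 ∧ (u.1 + 1 = 2*t - 1 ∨ u.1 + 1 = 2*t)) ∨
     ((u.1 + v.1) % 2 = 1 ∧ (v.1 + 1 = 2*t - 1 ∨ v.1 + 1 = 2*t))))

/-- The standard twin-star cycle-free `d`-partition `E_d = (Ω₁,…,Ω_d)`. -/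
def Ed (d : ℕ) : Fin d → SimpleGraph (Fin (2*d)) := fun t => Omega d (t.1 + 1)

/-- The twin-star graph `TS_d` with `2d` vertices: centers `0` and `1` are adjacent,
center `0` is adjacent to the `d-1` leaves `2,…,d`, and center `1` to the leaves
`d+1,…,2d-1`. -/
def TwinStar (d : ℕ) : SimpleGraph (Fin (2*d)) :=
  SimpleGraph.fromRel (fun u v =>
    (u.1 = 0 ∧ 1 ≤ v.1 ∧ v.1 ≤ d) ∨ (u.1 = 1 ∧ d + 1 ≤ v.1))

/-- The action of `(σ, τ) ∈ S_{2d} × S_d` on a `d`-partition: `σ` relabels vertices and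
`τ` permutes the order of the components. -/
def actP {n d : ℕ} (σ : Equiv.Perm (Fin n)) (τ : Equiv.Perm (Fin d))
    (P : Fin d → SimpleGraph (Fin n)) : Fin d → SimpleGraph (Fin n) :=
  fun i => (P (τ⁻¹ i)).map σ.toEmbedding

/-- One step of weak equivalence: `P = (σ,τ) · (an involution move applied to Q)`. -/
def WStep {n d : ℕ} (P Q : Fin d → SimpleGraph (Fin n)) : Prop :=
  ∃ (σ : Equiv.Perm (Fin n)) (τ : Equiv.Perm (Fin d)) (R : Fin d → SimpleGraph (Fin n)),
    Step Q R ∧ P = actP σ τ R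

/-- Weak equivalence of cycle-free `d`-partitions. -/
def WeakEquiv {n d : ℕ} : (Fin d → SimpleGraph (Fin n)) → (Fin d → SimpleGraph (Fin n)) → Prop :=
  Relation.ReflTransGen WStep


section Helpers

open Finset

lemma acyclic_anti {V : Type*} {G H : SimpleGraph V} (h : G ≤ H) (hH : H.IsAcyclic) :
    G.IsAcyclic := fun _ c hc => hH (c.mapLe h) (hc.mapLe h)

lemma forest_bound {V : Type*} [Fintype V] [DecidableEq V] :
    ∀ (m : ℕ) (G : SimpleGraph V) [Fintype G.edgeSet], G.IsAcyclic → G.edgeFinset.card ≤ m →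
    ∀ s : Finset V, (∀ x ∈ s, ∀ y ∈ s, x ≠ y → ¬G.Reachable x y) →
    G.edgeFinset.card + s.card ≤ Fintype.card V := by
  intro m
  induction m with
  | zero =>
    intro G _ hac hcard s hs
    rw [Nat.le_zero] at hcard
    rw [hcard, zero_add, ← card_univ]
    exact Finset.card_le_univ s
  | succ m ih =>
    intro G _ hac hcard s hs
    by_cases h0 : G.edgeFinset = ∅
    · rw [h0]
      simpa using (card_univ (α := V) ▸ Finset.card_le_univ s)
    obtain ⟨e, he⟩ := Finset.nonempty_iff_ne_empty.mpr h0
    induction e using Sym2.ind with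
    | _ u v =>
    have hadj : G.Adj u v := mem_edgeFinset.mp he
    have step : ∀ w₁ w₂ : V, G.Adj w₁ w₂ →
        ¬(∃ x ∈ s, (G \ fromEdgeSet {s(w₁,w₂)}).Reachable x w₁) →
        G.edgeFinset.card + s.card ≤ Fintype.card V := by
      intro w₁ w₂ hadj hno
      set G' := G \ fromEdgeSet {s(w₁,w₂)} with hG'
      have : Fintype ↑G'.edgeSet := Fintype.ofFinite _
      have hle : G' ≤ G := sdiff_le
      have hE' : G'.edgeFinset = G.edgeFinset.erase s(w₁,w₂) := by
        ext e
        induction e using Sym2.ind with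
        | _ x y =>
          simp only [mem_edgeFinset, mem_edgeSet, Finset.mem_erase, hG', sdiff_adj,
            fromEdgeSet_adj, Set.mem_singleton_iff]
          constructor
          · rintro ⟨h1, h2⟩
            exact ⟨fun h => h2 ⟨h, h1.ne⟩, h1⟩
          · rintro ⟨h1, h2⟩
            exact ⟨h2, fun h => h1 h.1⟩
      have hmem : s(w₁,w₂) ∈ G.edgeFinset := mem_edgeFinset.mpr hadj
      have hc' : G'.edgeFinset.card = G.edgeFinset.card - 1 := by
        rw [hE', Finset.card_erase_of_mem hmem]
      have hpos : 1 ≤ G.edgeFinset.card := Finset.card_pos.mpr ⟨_, hmem⟩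
      have hw₁ : w₁ ∉ s := fun h => hno ⟨w₁, h, Reachable.refl _⟩
      have hind : ∀ x ∈ insert w₁ s, ∀ y ∈ insert w₁ s, x ≠ y → ¬G'.Reachable x y := by
        intro x hx y hy hne hr
        rcases Finset.mem_insert.mp hx with hx1 | hx2
        · rcases Finset.mem_insert.mp hy with hy1 | hy2
          · exact hne (hx1.trans hy1.symm)
          · exact hno ⟨y, hy2, (hx1 ▸ hr).symm⟩
        · rcases Finset.mem_insert.mp hy with hy1 | hy2
          · exact hno ⟨x, hx2, hy1 ▸ hr⟩
          · exact hs x hx2 y hy2 hne (hr.mono hle)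
      have := ih G' (acyclic_anti hle hac) (by omega) (insert w₁ s) hind
      rw [Finset.card_insert_of_notMem hw₁] at this
      omega
    by_cases hu : ∃ x ∈ s, (G \ fromEdgeSet {s(u,v)}).Reachable x u
    · by_cases hv : ∃ x ∈ s, (G \ fromEdgeSet {s(v,u)}).Reachable x v
      · exfalso
        rw [Sym2.eq_swap] at hv
        obtain ⟨x, hx, hxu⟩ := hu
        obtain ⟨y, hy, hyv⟩ := hv
        have hbr : ¬(G \ fromEdgeSet {s(u,v)}).Reachable u v :=
          ((isBridge_iff.mp (isAcyclic_iff_forall_adj_isBridge.mp hac hadj)))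
        rcases eq_or_ne x y with rfl | hne
        · exact hbr (hxu.symm.trans hyv)
        · exact hs x hx y hy hne ((hxu.mono sdiff_le).trans
            ((hadj.reachable).trans (hyv.mono sdiff_le).symm))
      · exact step v u hadj.symm hv
    · exact step u v hadj hu

lemma card_evens (d : ℕ) :
    ((univ : Finset (Fin (2*d))).filter (fun u => u.1 % 2 = 0)).card = d := by
  have h : ((univ : Finset (Fin (2*d))).filter (fun u => u.1 % 2 = 0)).card
      = (univ : Finset (Fin d)).card := by
    refine Finset.card_bij' (fun u _ => (⟨u.1/2, by omega⟩ : Fin d))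
      (fun k _ => (⟨2*k.1, by omega⟩ : Fin (2*d))) ?_ ?_ ?_ ?_
    · intro u hu; simp
    · intro k _; simp
    · intro u hu; simp only [mem_filter] at hu; apply Fin.ext; simp; omega
    · intro k _; apply Fin.ext; simp
  simpa using h

lemma omega_adj_z (d : ℕ) (hd : 0 < d) (u : Fin (2*d)) :
    (Omega d d).Adj u ⟨2*d-1, Nat.sub_lt (Nat.mul_pos Nat.two_pos hd) Nat.one_pos⟩ ↔ u.1 % 2 = 0 := by
  have hu : u.1 < 2*d := u.isLt
  rw [Omega, fromRel_adj]
  rw [Fin.ne_iff_vne]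
  simp only [Fin.val_mk]
  omega

open scoped Classical in
lemma cfp_edgecard {d : ℕ} (hd : 0 < d) (P : Fin d → SimpleGraph (Fin (2*d)))
    (h : IsCFP P) (k : Fin d) : (P k).edgeFinset.card = 2*d - 1 := by
  have hle : ∀ l : Fin d, (P l).edgeFinset.card ≤ 2*d - 1 := by
    intro l
    have := forest_bound ((P l).edgeFinset.card) (P l) (h.2 l) le_rfl {⟨0, by omega⟩}
      (by intro x hx y hy hne _; simp only [Finset.mem_singleton] at hx hy
          exact hne (hx.trans hy.symm))
    simp only [Finset.card_singleton, Fintype.card_fin] at this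
    omega
  have hU : Finset.univ.biUnion (fun l => (P l).edgeFinset)
      = (⊤ : SimpleGraph (Fin (2*d))).edgeFinset := by
    ext e
    induction e using Sym2.ind with
    | _ u v =>
      simp only [Finset.mem_biUnion, Finset.mem_univ, true_and, mem_edgeFinset, mem_edgeSet,
        top_adj]
      constructor
      · rintro ⟨l, hl⟩; exact hl.ne
      · intro hne; obtain ⟨l, hl, -⟩ := h.1 u v hne; exact ⟨l, hl⟩
  have hdisj : ∀ l ∈ (univ : Finset (Fin d)), ∀ m ∈ (univ : Finset (Fin d)), l ≠ m →
      Disjoint ((P l).edgeFinset) ((P m).edgeFinset) := by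
    intro l _ m _ hne
    rw [Finset.disjoint_left]
    intro e hel hem
    induction e using Sym2.ind with
    | _ u v =>
      rw [mem_edgeFinset, mem_edgeSet] at hel hem
      obtain ⟨w, -, hw⟩ := h.1 u v hel.ne
      exact hne ((hw l hel).trans (hw m hem).symm)
  have hsum : ∑ l, (P l).edgeFinset.card = d * (2*d - 1) := by
    rw [← Finset.card_biUnion hdisj, hU, card_edgeFinset_top_eq_card_choose_two,
      Fintype.card_fin, Nat.choose_two_right]
    have : 2*d*(2*d-1) = 2*(d*(2*d-1)) := by ring
    rw [this, Nat.mul_div_cancel_left _ (by norm_num)]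
  have heq : ∀ l ∈ (univ : Finset (Fin d)), (P l).edgeFinset.card = 2*d-1 := by
    refine (Finset.sum_eq_sum_iff_of_le (fun l _ => hle l)).mp ?_
    rw [hsum, Finset.sum_const, card_univ, Fintype.card_fin, smul_eq_mul]
  exact heq k (Finset.mem_univ k)

open scoped Classical in
lemma cfp_reach {d : ℕ} (hd : 0 < d) (P : Fin d → SimpleGraph (Fin (2*d)))
    (h : IsCFP P) (k : Fin d) : ∀ u v, (P k).Reachable u v := by
  intro u v
  by_contra hr
  have hne : u ≠ v := by rintro rfl; exact hr (Reachable.refl u)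
  have hind : ∀ x ∈ ({u, v} : Finset (Fin (2*d))), ∀ y ∈ ({u, v} : Finset (Fin (2*d))),
      x ≠ y → ¬(P k).Reachable x y := by
    intro x hx y hy hxy hrxy
    simp only [Finset.mem_insert, Finset.mem_singleton] at hx hy
    rcases hx with rfl | rfl <;> rcases hy with rfl | rfl
    · exact hxy rfl
    · exact hr hrxy
    · exact hr hrxy.symm
    · exact hxy rfl
  have := forest_bound ((P k).edgeFinset.card) (P k) (h.2 k) le_rfl {u, v} hind
  rw [Finset.card_insert_of_notMem (by simpa using hne), Finset.card_singleton,
    Fintype.card_fin, cfp_edgecard hd P h k] at this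
  omega

lemma reach_nbr {V : Type*} {G : SimpleGraph V} {x y : V} (h : G.Reachable x y)
    (hne : x ≠ y) : ∃ w, G.Adj x w := by
  obtain ⟨p⟩ := h
  cases p with
  | nil => exact absurd rfl hne
  | cons h p => exact ⟨_, h⟩

open scoped Classical in
lemma cfp_nbr {d : ℕ} (hd : 0 < d) (Γ : Fin d → SimpleGraph (Fin (2*d)))
    (hΓ : IsCFP Γ) (hlast : Γ ⟨d-1, Nat.sub_lt hd Nat.one_pos⟩ = Omega d d) :
    ∀ k : Fin d, k ≠ ⟨d-1, Nat.sub_lt hd Nat.one_pos⟩ →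
      ((univ : Finset (Fin (2*d))).filter
        (fun u => (Γ k).Adj u ⟨2*d-1, Nat.sub_lt (Nat.mul_pos Nat.two_pos hd) Nat.one_pos⟩)).card = 1 := by
  set z : Fin (2*d) := ⟨2*d-1, Nat.sub_lt (Nat.mul_pos Nat.two_pos hd) Nat.one_pos⟩ with hz
  set N : Fin d → Finset (Fin (2*d)) :=
    fun l => (univ : Finset (Fin (2*d))).filter (fun u => (Γ l).Adj u z) with hN
  have hmemN : ∀ l u, u ∈ N l ↔ (Γ l).Adj u z := by
    intro l u; simp [hN]
  have hbi : Finset.univ.biUnion N = Finset.univ.erase z := by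
    ext u
    simp only [Finset.mem_biUnion, Finset.mem_univ, true_and, hmemN, Finset.mem_erase, and_true]
    constructor
    · rintro ⟨l, hl⟩; exact hl.ne
    · intro hne; obtain ⟨l, hl, -⟩ := hΓ.1 u z hne; exact ⟨l, hl⟩
  have hdisj : ∀ l ∈ (univ : Finset (Fin d)), ∀ m ∈ (univ : Finset (Fin d)), l ≠ m →
      Disjoint (N l) (N m) := by
    intro l _ m _ hne
    rw [Finset.disjoint_left]
    intro u hul hum
    rw [hmemN] at hul hum
    obtain ⟨w, -, hw⟩ := hΓ.1 u z hul.ne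
    exact hne ((hw l hul).trans (hw m hum).symm)
  have hsum : ∑ l, (N l).card = 2*d - 1 := by
    rw [← Finset.card_biUnion hdisj, hbi, Finset.card_erase_of_mem (Finset.mem_univ z),
      card_univ, Fintype.card_fin]
  have hlastcard : (N ⟨d-1, Nat.sub_lt hd Nat.one_pos⟩).card = d := by
    have hset : N ⟨d-1, Nat.sub_lt hd Nat.one_pos⟩
        = (univ : Finset (Fin (2*d))).filter (fun u => u.1 % 2 = 0) := by
      ext u
      rw [hmemN, hlast, Finset.mem_filter]
      simp only [Finset.mem_univ, true_and]
      exact omega_adj_z d hd u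
    rw [hset, card_evens]
  have hpos : ∀ l : Fin d, l ≠ ⟨d-1, Nat.sub_lt hd Nat.one_pos⟩ → 1 ≤ (N l).card := by
    intro l _
    obtain ⟨w, hw⟩ := reach_nbr (cfp_reach hd Γ hΓ l z ⟨0, by omega⟩)
      (by rw [Fin.ne_iff_vne]; simp [hz]; omega)
    exact Finset.card_pos.mpr ⟨w, (hmemN l w).mpr hw.symm⟩
  have hallone : ∀ l ∈ (univ : Finset (Fin d)).erase ⟨d-1, Nat.sub_lt hd Nat.one_pos⟩,
      1 = (N l).card := by
    refine (Finset.sum_eq_sum_iff_of_le ?_).mp ?_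
    · intro l hl; exact hpos l (Finset.mem_erase.mp hl).1
    · have h2 := Finset.sum_erase_add (univ : Finset (Fin d))
        (fun l => (N l).card) (Finset.mem_univ (⟨d-1, Nat.sub_lt hd Nat.one_pos⟩ : Fin d))
      have h3 : ∑ _l ∈ (univ : Finset (Fin d)).erase (⟨d-1, Nat.sub_lt hd Nat.one_pos⟩ : Fin d), (1:ℕ)
          = d - 1 := by
        rw [Finset.sum_const, Finset.card_erase_of_mem (Finset.mem_univ _), card_univ,
          Fintype.card_fin, smul_eq_mul, mul_one]
      omega
  intro k hk
  exact (hallone k (Finset.mem_erase.mpr ⟨hk, Finset.mem_univ k⟩)).symm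

lemma samePair_iff {n : ℕ} (u v a b : Fin n) : SamePair u v a b ↔ s(u,v) = s(a,b) := by
  show (u = a ∧ v = b) ∨ (u = b ∧ v = a) ↔ _
  exact Sym2.eq_iff.symm

end Helpers

set_option maxHeartbeats 3200000 in
/-- Let `(Γ₁,…,Γ_d)` be a cycle-free `d`-partition of `K_{2d}` with last component
`Ω_d^{(d)}`, and let `a ≠ b` be vertices among `{1,…,2d-2}` with `(a,b), (a,2d) ∈ Γ_i`
and `(b,2d) ∈ Γ_j` for `i ≠ j` both different from the last index. Then the involution
`(a,b,2d)` swaps the edges `(a,2d)` and `(b,2d)` between `Γ_i` and `Γ_j`, keeps `(a,b)`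
in `Γ_i`, and leaves all other edges incident to the vertices `2d-1` or `2d` unchanged. -/
theorem swap_edges_at_center (d : ℕ) (hd : 0 < d)
    (Γ Q : Fin d → SimpleGraph (Fin (2*d))) (hΓ : IsCFP Γ)
    (hlast : Γ ⟨d-1, by omega⟩ = Omega d d)
    (a b : Fin (2*d)) (ha : a.1 < 2*d-2) (hb : b.1 < 2*d-2) (hab : a ≠ b)
    (i j : Fin d) (hij : i ≠ j) (hi : i.1 < d-1) (hj : j.1 < d-1)
    (h1 : (Γ i).Adj a b) (h2 : (Γ i).Adj a ⟨2*d-1, by omega⟩)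
    (h3 : (Γ j).Adj b ⟨2*d-1, by omega⟩)
    (hQ : IsCFP Q) (hflip : FlipCond a b ⟨2*d-1, by omega⟩ Γ Q) :
    (Q i).Adj a b ∧ (Q j).Adj a ⟨2*d-1, by omega⟩ ∧ (Q i).Adj b ⟨2*d-1, by omega⟩ ∧
    (∀ u v : Fin (2*d),
      (u.1 = 2*d-2 ∨ u.1 = 2*d-1 ∨ v.1 = 2*d-2 ∨ v.1 = 2*d-1) →
      ¬ SamePair u v a ⟨2*d-1, by omega⟩ → ¬ SamePair u v b ⟨2*d-1, by omega⟩ →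
      ∀ k, ((Q k).Adj u v ↔ (Γ k).Adj u v)) := by
  classical
  set z : Fin (2*d) := ⟨2*d-1, by omega⟩ with hzdef
  have hzval : z.1 = 2*d-1 := rfl
  have haz : a ≠ z := by rw [Fin.ne_iff_vne, hzval]; omega
  have hbz : b ≠ z := by rw [Fin.ne_iff_vne, hzval]; omega
  have hinel : i ≠ (⟨d-1, by omega⟩ : Fin d) := by rw [Fin.ne_iff_vne]; simp; omega
  have hjnel : j ≠ (⟨d-1, by omega⟩ : Fin d) := by rw [Fin.ne_iff_vne]; simp; omega
  have uΓ : ∀ {u v : Fin (2*d)} {k l : Fin d}, (Γ k).Adj u v → (Γ l).Adj u v → k = l := by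
    intro u v k l hk hl
    obtain ⟨m, -, hm⟩ := hΓ.1 u v hk.ne
    exact (hm k hk).trans (hm l hl).symm
  have uQ : ∀ {u v : Fin (2*d)} {k l : Fin d}, (Q k).Adj u v → (Q l).Adj u v → k = l := by
    intro u v k l hk hl
    obtain ⟨m, -, hm⟩ := hQ.1 u v hk.ne
    exact (hm k hk).trans (hm l hl).symm
  have hΓab : ∀ k, (Γ k).Adj a b → k = i := fun k hk => uΓ hk h1
  have hΓaz : ∀ k, (Γ k).Adj a z → k = i := fun k hk => uΓ hk h2
  have hΓbz : ∀ k, (Γ k).Adj b z → k = j := fun k hk => uΓ hk h3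
  have hagree : ∀ u v : Fin (2*d), ¬ SamePair u v a b → ¬ SamePair u v a z →
      ¬ SamePair u v b z → ∀ k, ((Q k).Adj u v ↔ (Γ k).Adj u v) := hflip.1
  have hleQ : ∀ k, k ≠ i → k ≠ j → ∀ u v : Fin (2*d), (Γ k).Adj u v → (Q k).Adj u v := by
    intro k hki hkj u v huv
    have e1 : ¬ SamePair u v a b := by
      rintro (⟨rfl, rfl⟩ | ⟨rfl, rfl⟩)
      · exact hki (hΓab k huv)
      · exact hki (hΓab k huv.symm)
    have e2 : ¬ SamePair u v a z := by
      rintro (⟨rfl, rfl⟩ | ⟨rfl, rfl⟩)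
      · exact hki (hΓaz k huv)
      · exact hki (hΓaz k huv.symm)
    have e3 : ¬ SamePair u v b z := by
      rintro (⟨rfl, rfl⟩ | ⟨rfl, rfl⟩)
      · exact hkj (hΓbz k huv)
      · exact hkj (hΓbz k huv.symm)
    exact (hagree u v e1 e2 e3 k).mpr huv
  have hnoQ : ∀ k, k ≠ i → k ≠ j → ∀ (x y : Fin (2*d)), x ≠ y →
      ((x = a ∧ y = b) ∨ (x = a ∧ y = z) ∨ (x = b ∧ y = z)) → ¬ (Q k).Adj x y := by
    intro k hki hkj x y hxy hcase hadjQ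
    have hbr : ¬((Q k) \ fromEdgeSet {s(x,y)}).Reachable x y :=
      (isBridge_iff.mp (isAcyclic_iff_forall_adj_isBridge.mp (hQ.2 k) hadjQ))
    apply hbr
    refine Reachable.mono ?_ (cfp_reach hd Γ hΓ k x y)
    intro u v huv
    rw [sdiff_adj, fromEdgeSet_adj]
    refine ⟨hleQ k hki hkj u v huv, ?_⟩
    rintro ⟨heq, -⟩
    rcases Sym2.eq_iff.mp heq with ⟨rfl, rfl⟩ | ⟨rfl, rfl⟩
    · rcases hcase with ⟨rfl, rfl⟩ | ⟨rfl, rfl⟩ | ⟨rfl, rfl⟩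
      · exact hki (hΓab k huv)
      · exact hki (hΓaz k huv)
      · exact hkj (hΓbz k huv)
    · rcases hcase with ⟨rfl, rfl⟩ | ⟨rfl, rfl⟩ | ⟨rfl, rfl⟩
      · exact hki (hΓab k huv.symm)
      · exact hki (hΓaz k huv.symm)
      · exact hkj (hΓbz k huv.symm)
  have hQab : (Q i).Adj a b ∨ (Q j).Adj a b := by
    obtain ⟨k, hk, -⟩ := hQ.1 a b hab
    by_cases hki : k = i
    · left; rwa [hki] at hk
    by_cases hkj : k = j
    · right; rwa [hkj] at hk
    exact absurd hk (hnoQ k hki hkj a b hab (Or.inl ⟨rfl, rfl⟩))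
  -- pigeonhole at z for Γ
  have hnbr := cfp_nbr hd Γ hΓ hlast
  have hΓiz : ∀ u, (Γ i).Adj u z → u = a := by
    intro u hu
    obtain ⟨x, hx⟩ := Finset.card_eq_one.mp (hnbr i hinel)
    have hux : u ∈ (Finset.univ : Finset (Fin (2*d))).filter (fun w => (Γ i).Adj w z) :=
      Finset.mem_filter.mpr ⟨Finset.mem_univ u, hu⟩
    have hax : a ∈ (Finset.univ : Finset (Fin (2*d))).filter (fun w => (Γ i).Adj w z) :=
      Finset.mem_filter.mpr ⟨Finset.mem_univ a, h2⟩
    rw [hx, Finset.mem_singleton] at hux hax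
    exact hux.trans hax.symm
  have hΓjz : ∀ u, (Γ j).Adj u z → u = b := by
    intro u hu
    obtain ⟨x, hx⟩ := Finset.card_eq_one.mp (hnbr j hjnel)
    have hux : u ∈ (Finset.univ : Finset (Fin (2*d))).filter (fun w => (Γ j).Adj w z) :=
      Finset.mem_filter.mpr ⟨Finset.mem_univ u, hu⟩
    have hbx : b ∈ (Finset.univ : Finset (Fin (2*d))).filter (fun w => (Γ j).Adj w z) :=
      Finset.mem_filter.mpr ⟨Finset.mem_univ b, h3⟩
    rw [hx, Finset.mem_singleton] at hux hbx
    exact hux.trans hbx.symm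
  -- Q's neighbors of z in components i, j are among {a, b}
  have hQz : ∀ k, (k = i ∧ (∀ u, (Γ k).Adj u z → u = a)) ∨
      (k = j ∧ (∀ u, (Γ k).Adj u z → u = b)) → ∀ u, (Q k).Adj u z → u = a ∨ u = b := by
    intro k hcase u hu
    by_contra hcon
    push_neg at hcon
    obtain ⟨hua, hub⟩ := hcon
    have e1 : ¬ SamePair u z a b := by
      rintro (⟨h1', h2'⟩ | ⟨h1', h2'⟩)
      · exact hbz h2'.symm
      · exact haz h2'.symm
    have e2 : ¬ SamePair u z a z := by
      rintro (⟨h1', h2'⟩ | ⟨h1', h2'⟩)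
      · exact hua h1'
      · exact haz h2'.symm
    have e3 : ¬ SamePair u z b z := by
      rintro (⟨h1', h2'⟩ | ⟨h1', h2'⟩)
      · exact hub h1'
      · exact hbz h2'.symm
    have hΓu := (hagree u z e1 e2 e3 k).mp hu
    rcases hcase with ⟨-, hk⟩ | ⟨-, hk⟩
    · exact hua (hk u hΓu)
    · exact hub (hk u hΓu)
  have hQiz : ∀ u, (Q i).Adj u z → u = a ∨ u = b :=
    hQz i (Or.inl ⟨rfl, hΓiz⟩)
  have hQjz : ∀ u, (Q j).Adj u z → u = a ∨ u = b :=
    hQz j (Or.inr ⟨rfl, hΓjz⟩)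
  have hQinz : (Q i).Adj a z ∨ (Q i).Adj b z := by
    obtain ⟨w, hw⟩ := reach_nbr (cfp_reach hd Q hQ i z a) (Ne.symm haz)
    rcases hQiz w hw.symm with rfl | rfl
    · left; exact hw.symm
    · right; exact hw.symm
  have hQjnz : (Q j).Adj a z ∨ (Q j).Adj b z := by
    obtain ⟨w, hw⟩ := reach_nbr (cfp_reach hd Q hQ j z a) (Ne.symm haz)
    rcases hQjz w hw.symm with rfl | rfl
    · left; exact hw.symm
    · right; exact hw.symm
  -- part 4 (independent of the case analysis)
  have part4 : ∀ u v : Fin (2*d),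
      (u.1 = 2*d-2 ∨ u.1 = 2*d-1 ∨ v.1 = 2*d-2 ∨ v.1 = 2*d-1) →
      ¬ SamePair u v a z → ¬ SamePair u v b z →
      ∀ k, ((Q k).Adj u v ↔ (Γ k).Adj u v) := by
    intro u v hend hn1 hn2 k
    refine hagree u v ?_ hn1 hn2 k
    rintro (⟨rfl, rfl⟩ | ⟨rfl, rfl⟩) <;> rcases hend with h' | h' | h' | h' <;> omega
  by_cases hQiaz : (Q i).Adj a z
  · exfalso
    have hQjbz : (Q j).Adj b z := by
      rcases hQjnz with h' | h'
      · exact absurd (uQ h' hQiaz) (Ne.symm hij)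
      · exact h'
    have hdaz : ¬ Differs Γ Q a z := by
      rintro ⟨k, hk⟩
      apply hk
      by_cases hki : k = i
      · rw [hki]; exact iff_of_true hQiaz h2
      by_cases hkj : k = j
      · rw [hkj]
        exact iff_of_false (fun h' => hij (uQ hQiaz h')) (fun h' => hij (hΓaz j h').symm)
      · exact iff_of_false (hnoQ k hki hkj a z haz (Or.inr (Or.inl ⟨rfl, rfl⟩)))
          (fun h' => hki (hΓaz k h'))
    have hdbz : ¬ Differs Γ Q b z := by
      rintro ⟨k, hk⟩
      apply hk
      by_cases hki : k = i
      · rw [hki]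
        exact iff_of_false (fun h' => hij (uQ h' hQjbz)) (fun h' => hij (hΓbz i h'))
      by_cases hkj : k = j
      · rw [hkj]; exact iff_of_true hQjbz h3
      · exact iff_of_false (hnoQ k hki hkj b z hbz (Or.inr (Or.inr ⟨rfl, rfl⟩)))
          (fun h' => hkj (hΓbz k h'))
    rcases hflip.2 with ⟨-, h'⟩ | ⟨-, h'⟩ | ⟨h', -⟩
    · exact hdaz h'
    · exact hdbz h'
    · exact hdaz h'
  · have hQibz : (Q i).Adj b z := by
      rcases hQinz with h' | h'
      · exact absurd h' hQiaz
      · exact h'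
    have hQjaz : (Q j).Adj a z := by
      rcases hQjnz with h' | h'
      · exact h'
      · exact absurd (uQ h' hQibz) (Ne.symm hij)
    have hQiab : (Q i).Adj a b := by
      by_contra hno
      have hQjab : (Q j).Adj a b := by
        rcases hQab with h' | h'
        · exact absurd h' hno
        · exact h'
      have hQiab' : ¬ (Q i).Adj a b := hno
      have hΓibz : ¬ (Γ i).Adj b z := fun h' => hij (hΓbz i h')
      classical
      have hset : (Q i).edgeFinset
          = insert s(b,z) (((Γ i).edgeFinset.erase s(a,b)).erase s(a,z)) := by
        ext e
        induction e using Sym2.ind with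
        | _ x y =>
          simp only [mem_edgeFinset, mem_edgeSet, Finset.mem_insert, Finset.mem_erase]
          by_cases e3 : s(x,y) = s(b,z)
          · refine iff_of_true ?_ (Or.inl e3)
            rcases Sym2.eq_iff.mp e3 with ⟨rfl, rfl⟩ | ⟨rfl, rfl⟩
            · exact hQibz
            · exact hQibz.symm
          by_cases e1 : s(x,y) = s(a,b)
          · refine iff_of_false ?_ ?_
            · rcases Sym2.eq_iff.mp e1 with ⟨rfl, rfl⟩ | ⟨rfl, rfl⟩
              · exact hno
              · exact fun h' => hno h'.symm
            · rintro (h' | ⟨-, h2', -⟩)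
              · exact e3 (e1 ▸ h')
              · exact h2' e1
          by_cases e2 : s(x,y) = s(a,z)
          · refine iff_of_false ?_ ?_
            · rcases Sym2.eq_iff.mp e2 with ⟨rfl, rfl⟩ | ⟨rfl, rfl⟩
              · exact hQiaz
              · exact fun h' => hQiaz h'.symm
            · rintro (h' | ⟨h2', -, -⟩)
              · exact e3 (e2 ▸ h')
              · exact h2' e2
          · have n1 : ¬ SamePair x y a b := fun hs => e1 ((samePair_iff x y a b).mp hs)
            have n2 : ¬ SamePair x y a z := fun hs => e2 ((samePair_iff x y a z).mp hs)
            have n3 : ¬ SamePair x y b z := fun hs => e3 ((samePair_iff x y b z).mp hs)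
            constructor
            · intro h'
              exact Or.inr ⟨e2, e1, (hagree x y n1 n2 n3 i).mp h'⟩
            · rintro (h' | ⟨-, -, hγ⟩)
              · exact absurd h' e3
              · exact (hagree x y n1 n2 n3 i).mpr hγ
      have hmab : s(a,b) ∈ (Γ i).edgeFinset := mem_edgeFinset.mpr h1
      have hmaz : s(a,z) ∈ ((Γ i).edgeFinset.erase s(a,b)) := by
        refine Finset.mem_erase.mpr ⟨?_, mem_edgeFinset.mpr h2⟩
        intro heq
        rcases Sym2.eq_iff.mp heq with ⟨-, h2'⟩ | ⟨h1', -⟩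
        · exact hbz h2'.symm
        · exact hab h1'
      have hnbz : s(b,z) ∉ ((Γ i).edgeFinset.erase s(a,b)).erase s(a,z) := by
        intro hmem
        exact hΓibz (mem_edgeFinset.mp
          (Finset.mem_of_mem_erase (Finset.mem_of_mem_erase hmem)))
      have hcQ : (Q i).edgeFinset.card = 2*d - 1 := cfp_edgecard hd Q hQ i
      have hcΓ : (Γ i).edgeFinset.card = 2*d - 1 := cfp_edgecard hd Γ hΓ i
      rw [hset, Finset.card_insert_of_notMem hnbz, Finset.card_erase_of_mem hmaz,
        Finset.card_erase_of_mem hmab, hcΓ] at hcQ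
      omega
    exact ⟨hQiab, hQjaz, hQibz, part4⟩
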